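/- Let F : ℝ^n → ℝ^n be continuously differentiable on a neighborhood of p* with F(p*) = 0 and DF(p*) invertible. Then there exist η̄ ∈ (0,1) and ε > 0 such that: for every inexact Newton sequence (p_k) with forcing terms (η_k) satisfying η_k ≤ η̄ for all k, if ‖p_0 − p*‖ ≤ ε then ‖p_k − p*‖ ≤ ε for all k ≥ 0; consequently ‖p_{k+1} − p_k‖ ≤ 2ε for all k ≥ 0. -/

import Mathlib

open Filter Topology

set_option maxHeartbeats 1000000 in
set_option synthInstance.maxHeartbeats 200000 in
/-- Inexact Newton iterates started close to the root stay in the ε-ball around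
it; consequently consecutive iterates are at most 2ε apart. -/
theorem inexact_newton_iterates_stay_in_ball
    (n : ℕ) (F : EuclideanSpace ℝ (Fin n) → EuclideanSpace ℝ (Fin n))
    (pstar : EuclideanSpace ℝ (Fin n))
    (hF : ∃ U : Set (EuclideanSpace ℝ (Fin n)),
      IsOpen U ∧ pstar ∈ U ∧ ContDiffOn ℝ 1 F U)
    (hroot : F pstar = 0)
    (hinv : IsUnit (fderiv ℝ F pstar)) :
    ∃ ηbar : ℝ, 0 < ηbar ∧ ηbar < 1 ∧ ∃ ε > (0:ℝ),
      ∀ (p : ℕ → EuclideanSpace ℝ (Fin n)) (η : ℕ → ℝ),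
        (∀ k, 0 ≤ η k) →
        (∀ k, η k ≤ ηbar) →
        (∀ k, ‖F (p k) + (fderiv ℝ F (p k)) (p (k+1) - p k)‖ ≤ η k * ‖F (p k)‖) →
        ‖p 0 - pstar‖ ≤ ε →
        (∀ k, ‖p k - pstar‖ ≤ ε) ∧
        (∀ k, ‖p (k+1) - p k‖ ≤ 2 * ε) := by
  obtain ⟨U, hU, hpU, hC⟩ := hF
  set A : EuclideanSpace ℝ (Fin n) →L[ℝ] EuclideanSpace ℝ (Fin n) := fderiv ℝ F pstar with hA
  set B : EuclideanSpace ℝ (Fin n) →L[ℝ] EuclideanSpace ℝ (Fin n) := ↑hinv.unit⁻¹ with hB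
  have hBA : ∀ x : EuclideanSpace ℝ (Fin n), B (A x) = x := by
    intro x
    have h1 : (B * A : EuclideanSpace ℝ (Fin n) →L[ℝ] EuclideanSpace ℝ (Fin n)) = 1 := hinv.val_inv_mul
    calc B (A x) = (B * A : EuclideanSpace ℝ (Fin n) →L[ℝ] EuclideanSpace ℝ (Fin n)) x := rfl
    _ = x := by rw [h1]; rfl
  set β := ‖B‖ with hβdef
  have hβ : 0 ≤ β := norm_nonneg _
  set α := ‖A‖ with hαdef
  have hα : 0 ≤ α := norm_nonneg _
  have hkey : ∀ x : EuclideanSpace ℝ (Fin n), ‖x‖ ≤ β * ‖A x‖ := fun x => by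
    calc ‖x‖ = ‖B (A x)‖ := by rw [hBA]
    _ ≤ β * ‖A x‖ := B.le_opNorm _
  -- constants
  set ε₁ : ℝ := 1 / (8 * (β + 1)) with hε₁def
  have hε₁pos : 0 < ε₁ := by positivity
  have hε₁le : ε₁ ≤ 1 := by
    rw [hε₁def]
    rw [div_le_one (by positivity)]
    nlinarith
  have hβε₁ : β * ε₁ ≤ 1 / 8 := by
    rw [hε₁def, mul_one_div, div_le_div_iff₀ (by positivity) (by norm_num)]
    nlinarith
  set ηb : ℝ := min (1/2) (1 / (8 * (β + 1) * (α + 1))) with hηbdef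
  have hηbpos : 0 < ηb := lt_min (by norm_num) (by positivity)
  have hηblt : ηb < 1 := lt_of_le_of_lt (min_le_left _ _) (by norm_num)
  have hηbound : β * ηb * (α + ε₁) ≤ 1 / 8 := by
    have h1 : ηb ≤ 1 / (8 * (β + 1) * (α + 1)) := min_le_right _ _
    have h2 : β * ηb * (α + ε₁) ≤ β * (1 / (8 * (β + 1) * (α + 1))) * (α + 1) := by
      apply mul_le_mul
      · exact mul_le_mul_of_nonneg_left h1 hβ
      · linarith
      · positivity
      · positivity
    calc β * ηb * (α + ε₁) ≤ β * (1 / (8 * (β + 1) * (α + 1))) * (α + 1) := h2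
    _ = β * (α+1) / (8 * (β + 1) * (α + 1)) := by ring
    _ ≤ 1 / 8 := by
        rw [div_le_div_iff₀ (by positivity) (by norm_num)]
        nlinarith
  -- differentiability at pstar
  have hdiff : HasFDerivAt F A pstar :=
    ((hC.contDiffAt (hU.mem_nhds hpU)).differentiableAt one_ne_zero).hasFDerivAt
  -- Taylor eventually
  have hTay : ∀ᶠ (x : EuclideanSpace ℝ (Fin n)) in 𝓝 pstar, ‖F x - F pstar - A (x - pstar)‖ ≤ ε₁ * ‖x - pstar‖ := by
    have := hdiff.isLittleO
    exact this.def hε₁pos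
  -- derivative continuity eventually
  have hcontOn : ContinuousOn (fderiv ℝ F) U :=
    hC.continuousOn_fderiv_of_isOpen hU le_rfl
  have hcontAt : ContinuousAt (fderiv ℝ F) pstar :=
    hcontOn.continuousAt (hU.mem_nhds hpU)
  have hDer : ∀ᶠ (x : EuclideanSpace ℝ (Fin n)) in 𝓝 pstar, ‖fderiv ℝ F x - A‖ ≤ ε₁ := by
    have hmem : Metric.closedBall A ε₁ ∈ 𝓝 A := Metric.closedBall_mem_nhds A hε₁pos
    filter_upwards [hcontAt hmem] with x hx
    simpa [dist_eq_norm] using hx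
  obtain ⟨r, hrpos, hr⟩ := Metric.eventually_nhds_iff.1 (hTay.and hDer)
  refine ⟨ηb, hηbpos, hηblt, r/2, by positivity, ?_⟩
  intro p η hηnn hηle hres hp0
  set ε := r/2
  have hstep : ∀ k, ‖p k - pstar‖ ≤ ε → ‖p (k+1) - pstar‖ ≤ ‖p k - pstar‖ := by
    intro k hk
    set e := p k - pstar with he
    set e' := p (k+1) - pstar with he'
    set d := p (k+1) - p k with hd
    have hclose : dist (p k) pstar < r := by
      rw [dist_eq_norm]
      calc ‖p k - pstar‖ ≤ ε := hk
      _ < r := by simp only [ε]; linarith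
    obtain ⟨hT, hD⟩ := hr hclose
    rw [hroot, sub_zero] at hT
    have hFk : ‖F (p k)‖ ≤ (α + ε₁) * ‖e‖ := by
      calc ‖F (p k)‖ = ‖(F (p k) - A e) + A e‖ := by rw [sub_add_cancel]
      _ ≤ ‖F (p k) - A e‖ + ‖A e‖ := norm_add_le _ _
      _ ≤ ε₁ * ‖e‖ + α * ‖e‖ := add_le_add hT (A.le_opNorm _)
      _ = (α + ε₁) * ‖e‖ := by ring
    have hdle : ‖d‖ ≤ ‖e'‖ + ‖e‖ := by
      have : d = e' - e := by simp only [he, he', hd]; abel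
      rw [this]; exact norm_sub_le _ _
    have hid : A e' = (A e - F (p k)) + ((A - fderiv ℝ F (p k)) d)
        + (F (p k) + (fderiv ℝ F (p k)) d) := by
      have h1 : e' = e + d := by simp only [he, he', hd]; abel
      rw [h1, map_add]
      simp only [ContinuousLinearMap.sub_apply]
      abel
    have hbound : ‖A e'‖ ≤ ε₁ * ‖e‖ + ε₁ * (‖e'‖ + ‖e‖) + ηb * ((α + ε₁) * ‖e‖) := by
      rw [hid]
      have t1 : ‖A e - F (p k)‖ ≤ ε₁ * ‖e‖ := by rw [norm_sub_rev]; exact hT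
      have t2 : ‖(A - fderiv ℝ F (p k)) d‖ ≤ ε₁ * (‖e'‖ + ‖e‖) := by
        calc ‖(A - fderiv ℝ F (p k)) d‖ ≤ ‖A - fderiv ℝ F (p k)‖ * ‖d‖ :=
          (A - fderiv ℝ F (p k)).le_opNorm _
        _ ≤ ε₁ * (‖e'‖ + ‖e‖) := by
            apply mul_le_mul _ hdle (norm_nonneg _) (le_of_lt hε₁pos)
            rw [norm_sub_rev]; exact hD
      have t3 : ‖F (p k) + (fderiv ℝ F (p k)) d‖ ≤ ηb * ((α + ε₁) * ‖e‖) := by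
        calc ‖F (p k) + (fderiv ℝ F (p k)) d‖ ≤ η k * ‖F (p k)‖ := hres k
        _ ≤ ηb * ((α + ε₁) * ‖e‖) := by
            apply mul_le_mul (hηle k) hFk (norm_nonneg _) (le_of_lt hηbpos)
      refine le_trans (norm_add₃_le) (by linarith)
    have hmain : ‖e'‖ ≤ β * (ε₁ * ‖e‖ + ε₁ * (‖e'‖ + ‖e‖) + ηb * ((α + ε₁) * ‖e‖)) := by
      calc ‖e'‖ ≤ β * ‖A e'‖ := hkey e'
      _ ≤ _ := mul_le_mul_of_nonneg_left hbound hβ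
    have hne : 0 ≤ ‖e‖ := norm_nonneg _
    have hne' : 0 ≤ ‖e'‖ := norm_nonneg _
    -- β*ε₁ ≤ 1/8, β*ηb*(α+ε₁) ≤ 1/8
    nlinarith [mul_le_mul_of_nonneg_right hβε₁ hne, mul_le_mul_of_nonneg_right hβε₁ hne',
      mul_le_mul_of_nonneg_right hηbound hne]
  have hball : ∀ k, ‖p k - pstar‖ ≤ ε := by
    intro k
    induction k with
    | zero => exact hp0
    | succ m ih => exact le_trans (hstep m ih) ih
  refine ⟨hball, fun k => ?_⟩
  have h1 := hball k
  have h2 := hball (k+1)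
  calc ‖p (k+1) - p k‖ = ‖(p (k+1) - pstar) - (p k - pstar)‖ := by abel_nf
  _ ≤ ‖p (k+1) - pstar‖ + ‖p k - pstar‖ := norm_sub_le _ _
  _ ≤ 2 * ε := by linarith
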